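/- The Hecke algebra operators satisfy the braid relation T_i T_{i+1} T_i = T_{i+1} T_i T_{i+1} as operators on polynomials in x_1, ..., x_n over Q(t_1, t_2). -/

import Mathlib

open MvPolynomial

noncomputable section

/-- The field `ℚ(t₁, t₂)`. -/
abbrev Fqt : Type := FractionRing (MvPolynomial (Fin 2) ℚ)

/-- The parameter `t₁` of the Hecke algebra. -/
def t1 : Fqt := algebraMap (MvPolynomial (Fin 2) ℚ) Fqt (X 0)

/-- The parameter `t₂` of the Hecke algebra. -/
def t2 : Fqt := algebraMap (MvPolynomial (Fin 2) ℚ) Fqt (X 1)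

set_option maxHeartbeats 4000000 in
/-- Pure field algebra behind the braid relation computation. -/
theorem braid_algebra {K : Type*} [Field K]
    {Av Bv Cv u1 u2 y1 y2 y3 y4 y5 y6 : K}
    {vp1 vp2 vp3 vp4 vq1 vq2 vq3 vq4 vr1 vr2 vw1 vw2 vz1 vFL : K}
    {vP1 vP2 vP3 vP4 vQ1 vQ2 vQ3 vQ4 vR1 vR2 vW1 vW2 vZ1 vFR : K}
    (nAB : Av - Bv ≠ 0) (nBC : Bv - Cv ≠ 0) (nAC : Av - Cv ≠ 0)
    (d1 : (Av - Bv) * vp1 = Av * y1 - Bv * y2)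
    (d2 : (Av - Bv) * vp2 = Av * y1 - Bv * y2)
    (d3 : (Av - Cv) * vp3 = Av * y3 - Cv * y5)
    (d4 : (Bv - Cv) * vp4 = Bv * y4 - Cv * y6)
    (s1 : vq1 = u1 * vp1 - u2 * y2)
    (s2 : vq2 = u1 * vp2 - u2 * y1)
    (s3 : vq3 = u1 * vp3 - u2 * y5)
    (s4 : vq4 = u1 * vp4 - u2 * y6)
    (d5 : (Bv - Cv) * vr1 = Bv * vq1 - Cv * vq3)
    (d6 : (Av - Cv) * vr2 = Av * vq2 - Cv * vq4)
    (s5 : vw1 = u1 * vr1 - u2 * vq3)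
    (s6 : vw2 = u1 * vr2 - u2 * vq4)
    (d7 : (Av - Bv) * vz1 = Av * vw1 - Bv * vw2)
    (s7 : vFL = u1 * vz1 - u2 * vw2)
    (d1' : (Bv - Cv) * vP1 = Bv * y1 - Cv * y3)
    (d2' : (Bv - Cv) * vP2 = Bv * y1 - Cv * y3)
    (d3' : (Av - Cv) * vP3 = Av * y2 - Cv * y4)
    (d4' : (Av - Bv) * vP4 = Av * y5 - Bv * y6)
    (s1' : vQ1 = u1 * vP1 - u2 * y3)
    (s2' : vQ2 = u1 * vP2 - u2 * y1)
    (s3' : vQ3 = u1 * vP3 - u2 * y4)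
    (s4' : vQ4 = u1 * vP4 - u2 * y6)
    (d5' : (Av - Bv) * vR1 = Av * vQ1 - Bv * vQ3)
    (d6' : (Av - Cv) * vR2 = Av * vQ2 - Cv * vQ4)
    (s5' : vW1 = u1 * vR1 - u2 * vQ3)
    (s6' : vW2 = u1 * vR2 - u2 * vQ4)
    (d7' : (Bv - Cv) * vZ1 = Bv * vW1 - Cv * vW2)
    (s7' : vFR = u1 * vZ1 - u2 * vW2) :
    vFL = vFR := by
  have hq1 : (Av - Bv) * vq1 = (1) * Bv * u2 * y2 + (-1) * Bv * u1 * y2 + (-1) * Av * u2 * y2 + (1) * Av * u1 * y1 := by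
    linear_combination (Av - Bv) * s1 + u1 * d1
  have hq2 : (Av - Bv) * vq2 = (1) * Bv * u2 * y1 + (-1) * Bv * u1 * y2 + (-1) * Av * u2 * y1 + (1) * Av * u1 * y1 := by
    linear_combination (Av - Bv) * s2 + u1 * d2
  have hq3 : (Av - Cv) * vq3 = (1) * Cv * u2 * y5 + (-1) * Cv * u1 * y5 + (-1) * Av * u2 * y5 + (1) * Av * u1 * y3 := by
    linear_combination (Av - Cv) * s3 + u1 * d3
  have hq4 : (Bv - Cv) * vq4 = (1) * Cv * u2 * y6 + (-1) * Cv * u1 * y6 + (-1) * Bv * u2 * y6 + (1) * Bv * u1 * y4 := by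
    linear_combination (Bv - Cv) * s4 + u1 * d4
  have hr1 : ((Av - Bv) * (Bv - Cv) * (Av - Cv)) * vr1 = (1) * Bv * Cv ^ 2 * u2 * y5 + (-1) * Bv * Cv ^ 2 * u1 * y5 + (-1) * Bv ^ 2 * Cv * u2 * y2 + (1) * Bv ^ 2 * Cv * u1 * y2 + (-1) * Av * Cv ^ 2 * u2 * y5 + (1) * Av * Cv ^ 2 * u1 * y5 + (-1) * Av * Bv * Cv * u2 * y5 + (1) * Av * Bv * Cv * u2 * y2 + (1) * Av * Bv * Cv * u1 * y3 + (-1) * Av * Bv * Cv * u1 * y1 + (1) * Av * Bv ^ 2 * u2 * y2 + (-1) * Av * Bv ^ 2 * u1 * y2 + (1) * Av ^ 2 * Cv * u2 * y5 + (-1) * Av ^ 2 * Cv * u1 * y3 + (-1) * Av ^ 2 * Bv * u2 * y2 + (1) * Av ^ 2 * Bv * u1 * y1 := by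
    linear_combination (Av - Bv) * (Av - Cv) * d5 + Bv * (Av - Cv) * hq1 - Cv * (Av - Bv) * hq3
  have hr2 : ((Av - Bv) * (Bv - Cv) * (Av - Cv)) * vr2 = (1) * Bv * Cv ^ 2 * u2 * y6 + (-1) * Bv * Cv ^ 2 * u1 * y6 + (-1) * Bv ^ 2 * Cv * u2 * y6 + (1) * Bv ^ 2 * Cv * u1 * y4 + (-1) * Av * Cv ^ 2 * u2 * y6 + (1) * Av * Cv ^ 2 * u1 * y6 + (1) * Av * Bv * Cv * u2 * y6 + (-1) * Av * Bv * Cv * u2 * y1 + (-1) * Av * Bv * Cv * u1 * y4 + (1) * Av * Bv * Cv * u1 * y2 + (1) * Av * Bv ^ 2 * u2 * y1 + (-1) * Av * Bv ^ 2 * u1 * y2 + (1) * Av ^ 2 * Cv * u2 * y1 + (-1) * Av ^ 2 * Cv * u1 * y1 + (-1) * Av ^ 2 * Bv * u2 * y1 + (1) * Av ^ 2 * Bv * u1 * y1 := by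
    linear_combination (Av - Bv) * (Bv - Cv) * d6 + Av * (Bv - Cv) * hq2 - Cv * (Av - Bv) * hq4
  have hw1 : ((Av - Bv) * (Bv - Cv) * (Av - Cv)) * vw1 = (-1) * Bv * Cv ^ 2 * u2 ^ 2 * y5 + (2) * Bv * Cv ^ 2 * u1 * u2 * y5 + (-1) * Bv * Cv ^ 2 * u1 ^ 2 * y5 + (1) * Bv ^ 2 * Cv * u2 ^ 2 * y5 + (-1) * Bv ^ 2 * Cv * u1 * u2 * y5 + (-1) * Bv ^ 2 * Cv * u1 * u2 * y2 + (1) * Bv ^ 2 * Cv * u1 ^ 2 * y2 + (1) * Av * Cv ^ 2 * u2 ^ 2 * y5 + (-2) * Av * Cv ^ 2 * u1 * u2 * y5 + (1) * Av * Cv ^ 2 * u1 ^ 2 * y5 + (-1) * Av * Bv * Cv * u1 * u2 * y3 + (1) * Av * Bv * Cv * u1 * u2 * y2 + (1) * Av * Bv * Cv * u1 ^ 2 * y3 + (-1) * Av * Bv * Cv * u1 ^ 2 * y1 + (-1) * Av * Bv ^ 2 * u2 ^ 2 * y5 + (1) * Av * Bv ^ 2 * u1 * u2 * y3 + (1) *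 Av * Bv ^ 2 * u1 * u2 * y2 + (-1) * Av * Bv ^ 2 * u1 ^ 2 * y2 + (-1) * Av ^ 2 * Cv * u2 ^ 2 * y5 + (1) * Av ^ 2 * Cv * u1 * u2 * y5 + (1) * Av ^ 2 * Cv * u1 * u2 * y3 + (-1) * Av ^ 2 * Cv * u1 ^ 2 * y3 + (1) * Av ^ 2 * Bv * u2 ^ 2 * y5 + (-1) * Av ^ 2 * Bv * u1 * u2 * y3 + (-1) * Av ^ 2 * Bv * u1 * u2 * y2 + (1) * Av ^ 2 * Bv * u1 ^ 2 * y1 := by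
    linear_combination ((Av - Bv) * (Bv - Cv) * (Av - Cv)) * s5 + u1 * hr1 - u2 * ((Av - Bv) * (Bv - Cv)) * hq3
  have hw2 : ((Av - Bv) * (Bv - Cv) * (Av - Cv)) * vw2 = (-1) * Bv * Cv ^ 2 * u2 ^ 2 * y6 + (2) * Bv * Cv ^ 2 * u1 * u2 * y6 + (-1) * Bv * Cv ^ 2 * u1 ^ 2 * y6 + (1) * Bv ^ 2 * Cv * u2 ^ 2 * y6 + (-1) * Bv ^ 2 * Cv * u1 * u2 * y6 + (-1) * Bv ^ 2 * Cv * u1 * u2 * y4 + (1) * Bv ^ 2 * Cv * u1 ^ 2 * y4 + (1) * Av * Cv ^ 2 * u2 ^ 2 * y6 + (-2) * Av * Cv ^ 2 * u1 * u2 * y6 + (1) * Av * Cv ^ 2 * u1 ^ 2 * y6 + (1) * Av * Bv * Cv * u1 * u2 * y4 + (-1) * Av * Bv * Cv * u1 * u2 * y1 + (-1) * Av * Bv * Cv * u1 ^ 2 * y4 + (1) * Av * Bv * Cv * u1 ^ 2 * y2 + (-1) * Av * Bv ^ 2 * u2 ^ 2 * y6 + (1) * Av * Bv ^ 2 * u1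 * u2 * y4 + (1) * Av * Bv ^ 2 * u1 * u2 * y1 + (-1) * Av * Bv ^ 2 * u1 ^ 2 * y2 + (-1) * Av ^ 2 * Cv * u2 ^ 2 * y6 + (1) * Av ^ 2 * Cv * u1 * u2 * y6 + (1) * Av ^ 2 * Cv * u1 * u2 * y1 + (-1) * Av ^ 2 * Cv * u1 ^ 2 * y1 + (1) * Av ^ 2 * Bv * u2 ^ 2 * y6 + (-1) * Av ^ 2 * Bv * u1 * u2 * y4 + (-1) * Av ^ 2 * Bv * u1 * u2 * y1 + (1) * Av ^ 2 * Bv * u1 ^ 2 * y1 := by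
    linear_combination ((Av - Bv) * (Bv - Cv) * (Av - Cv)) * s6 + u1 * hr2 - u2 * ((Av - Bv) * (Av - Cv)) * hq4
  have hz1 : ((Av - Bv) ^ 2 * (Bv - Cv) * (Av - Cv)) * vz1 = (1) * Bv ^ 2 * Cv ^ 2 * u2 ^ 2 * y6 + (-2) * Bv ^ 2 * Cv ^ 2 * u1 * u2 * y6 + (1) * Bv ^ 2 * Cv ^ 2 * u1 ^ 2 * y6 + (-1) * Bv ^ 3 * Cv * u2 ^ 2 * y6 + (1) * Bv ^ 3 * Cv * u1 * u2 * y6 + (1) * Bv ^ 3 * Cv * u1 * u2 * y4 + (-1) * Bv ^ 3 * Cv * u1 ^ 2 * y4 + (-1) * Av * Bv * Cv ^ 2 * u2 ^ 2 * y6 + (-1) * Av * Bv * Cv ^ 2 * u2 ^ 2 * y5 + (2) * Av * Bv * Cv ^ 2 * u1 * u2 * y6 + (2) * Av * Bv * Cv ^ 2 * u1 * u2 * y5 + (-1) * Av * Bv * Cv ^ 2 * u1 ^ 2 * y6 + (-1) * Av * Bv * Cv ^ 2 * u1 ^ 2 * y5 + (1) * Av * Bv ^ 2 * Cv * u2 ^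 2 * y5 + (-1) * Av * Bv ^ 2 * Cv * u1 * u2 * y5 + (-1) * Av * Bv ^ 2 * Cv * u1 * u2 * y4 + (-1) * Av * Bv ^ 2 * Cv * u1 * u2 * y2 + (1) * Av * Bv ^ 2 * Cv * u1 * u2 * y1 + (1) * Av * Bv ^ 2 * Cv * u1 ^ 2 * y4 + (1) * Av * Bv ^ 3 * u2 ^ 2 * y6 + (-1) * Av * Bv ^ 3 * u1 * u2 * y4 + (-1) * Av * Bv ^ 3 * u1 * u2 * y1 + (1) * Av * Bv ^ 3 * u1 ^ 2 * y2 + (1) * Av ^ 2 * Cv ^ 2 * u2 ^ 2 * y5 + (-2) * Av ^ 2 * Cv ^ 2 * u1 * u2 * y5 + (1) * Av ^ 2 * Cv ^ 2 * u1 ^ 2 * y5 + (1) * Av ^ 2 * Bv * Cv * u2 ^ 2 * y6 + (-1) * Av ^ 2 * Bv * Cv * u1 * u2 * y6 + (-1) * Av ^ 2 * Bv * Cv * u1 * u2 * y3 + (1) * Av ^ 2 * Bv * Cv * u1 * u2 * y2 + (-1) * Av ^ 2 * Bv * Cv * u1 * u2 * y1 + (1) * Av ^ 2 * Bv * Cv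 * u1 ^ 2 * y3 + (-1) * Av ^ 2 * Bv ^ 2 * u2 ^ 2 * y6 + (-1) * Av ^ 2 * Bv ^ 2 * u2 ^ 2 * y5 + (1) * Av ^ 2 * Bv ^ 2 * u1 * u2 * y4 + (1) * Av ^ 2 * Bv ^ 2 * u1 * u2 * y3 + (1) * Av ^ 2 * Bv ^ 2 * u1 * u2 * y2 + (1) * Av ^ 2 * Bv ^ 2 * u1 * u2 * y1 + (-1) * Av ^ 2 * Bv ^ 2 * u1 ^ 2 * y2 + (-1) * Av ^ 2 * Bv ^ 2 * u1 ^ 2 * y1 + (-1) * Av ^ 3 * Cv * u2 ^ 2 * y5 + (1) * Av ^ 3 * Cv * u1 * u2 * y5 + (1) * Av ^ 3 * Cv * u1 * u2 * y3 + (-1) * Av ^ 3 * Cv * u1 ^ 2 * y3 + (1) * Av ^ 3 * Bv * u2 ^ 2 * y5 + (-1) * Av ^ 3 * Bv * u1 * u2 * y3 + (-1) * Av ^ 3 * Bv * u1 * u2 * y2 + (1) * Av ^ 3 * Bv * u1 ^ 2 * y1 := by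
    linear_combination ((Av - Bv) * (Bv - Cv) * (Av - Cv)) * d7 + Av * hw1 - Bv * hw2
  have hFL : ((Av - Bv) ^ 2 * (Bv - Cv) * (Av - Cv)) * vFL = (-1) * Bv ^ 2 * Cv ^ 2 * u2 ^ 3 * y6 + (3) * Bv ^ 2 * Cv ^ 2 * u1 * u2 ^ 2 * y6 + (-3) * Bv ^ 2 * Cv ^ 2 * u1 ^ 2 * u2 * y6 + (1) * Bv ^ 2 * Cv ^ 2 * u1 ^ 3 * y6 + (1) * Bv ^ 3 * Cv * u2 ^ 3 * y6 + (-2) * Bv ^ 3 * Cv * u1 * u2 ^ 2 * y6 + (-1) * Bv ^ 3 * Cv * u1 * u2 ^ 2 * y4 + (1) * Bv ^ 3 * Cv * u1 ^ 2 * u2 * y6 + (2) * Bv ^ 3 * Cv * u1 ^ 2 * u2 * y4 + (-1) * Bv ^ 3 * Cv * u1 ^ 3 * y4 + (2) * Av * Bv * Cv ^ 2 * u2 ^ 3 * y6 + (-5) * Av * Bv * Cv ^ 2 * u1 * u2 ^ 2 * y6 + (-1) * Av * Bv * Cv ^ 2 * u1 * u2 ^ 2 * y5 + (4) * Av * Bv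 * Cv ^ 2 * u1 ^ 2 * u2 * y6 + (2) * Av * Bv * Cv ^ 2 * u1 ^ 2 * u2 * y5 + (-1) * Av * Bv * Cv ^ 2 * u1 ^ 3 * y6 + (-1) * Av * Bv * Cv ^ 2 * u1 ^ 3 * y5 + (-1) * Av * Bv ^ 2 * Cv * u2 ^ 3 * y6 + (1) * Av * Bv ^ 2 * Cv * u1 * u2 ^ 2 * y6 + (1) * Av * Bv ^ 2 * Cv * u1 * u2 ^ 2 * y5 + (2) * Av * Bv ^ 2 * Cv * u1 * u2 ^ 2 * y4 + (-1) * Av * Bv ^ 2 * Cv * u1 * u2 ^ 2 * y1 + (-1) * Av * Bv ^ 2 * Cv * u1 ^ 2 * u2 * y5 + (-3) * Av * Bv ^ 2 * Cv * u1 ^ 2 * u2 * y4 + (1) * Av * Bv ^ 2 * Cv * u1 ^ 2 * u2 * y1 + (1) * Av * Bv ^ 2 * Cv * u1 ^ 3 * y4 + (-1) * Av * Bv ^ 3 * u2 ^ 3 * y6 + (1) * Av * Bv ^ 3 * u1 * u2 ^ 2 * y6 + (1) * Av * Bv ^ 3 * u1 * u2 ^ 2 * y4 + (1) * Av * Bv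 ^ 3 * u1 * u2 ^ 2 * y1 + (-1) * Av * Bv ^ 3 * u1 ^ 2 * u2 * y4 + (-1) * Av * Bv ^ 3 * u1 ^ 2 * u2 * y2 + (-1) * Av * Bv ^ 3 * u1 ^ 2 * u2 * y1 + (1) * Av * Bv ^ 3 * u1 ^ 3 * y2 + (-1) * Av ^ 2 * Cv ^ 2 * u2 ^ 3 * y6 + (2) * Av ^ 2 * Cv ^ 2 * u1 * u2 ^ 2 * y6 + (1) * Av ^ 2 * Cv ^ 2 * u1 * u2 ^ 2 * y5 + (-1) * Av ^ 2 * Cv ^ 2 * u1 ^ 2 * u2 * y6 + (-2) * Av ^ 2 * Cv ^ 2 * u1 ^ 2 * u2 * y5 + (1) * Av ^ 2 * Cv ^ 2 * u1 ^ 3 * y5 + (-1) * Av ^ 2 * Bv * Cv * u2 ^ 3 * y6 + (2) * Av ^ 2 * Bv * Cv * u1 * u2 ^ 2 * y6 + (-1) * Av ^ 2 * Bv * Cv * u1 * u2 ^ 2 * y4 + (2) * Av ^ 2 * Bv * Cv * u1 * u2 ^ 2 * y1 + (-1) * Av ^ 2 * Bv * Cv * u1 ^ 2 * u2 * y6 +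 (1) * Av ^ 2 * Bv * Cv * u1 ^ 2 * u2 * y4 + (-1) * Av ^ 2 * Bv * Cv * u1 ^ 2 * u2 * y3 + (-2) * Av ^ 2 * Bv * Cv * u1 ^ 2 * u2 * y1 + (1) * Av ^ 2 * Bv * Cv * u1 ^ 3 * y3 + (2) * Av ^ 2 * Bv ^ 2 * u2 ^ 3 * y6 + (-1) * Av ^ 2 * Bv ^ 2 * u1 * u2 ^ 2 * y6 + (-1) * Av ^ 2 * Bv ^ 2 * u1 * u2 ^ 2 * y5 + (-2) * Av ^ 2 * Bv ^ 2 * u1 * u2 ^ 2 * y4 + (-2) * Av ^ 2 * Bv ^ 2 * u1 * u2 ^ 2 * y1 + (1) * Av ^ 2 * Bv ^ 2 * u1 ^ 2 * u2 * y4 + (1) * Av ^ 2 * Bv ^ 2 * u1 ^ 2 * u2 * y3 + (2) * Av ^ 2 * Bv ^ 2 * u1 ^ 2 * u2 * y2 + (2) * Av ^ 2 * Bv ^ 2 * u1 ^ 2 * u2 * y1 + (-1) * Av ^ 2 * Bv ^ 2 * u1 ^ 3 * y2 + (-1) * Av ^ 2 * Bv ^ 2 * u1 ^ 3 * y1 +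 (1) * Av ^ 3 * Cv * u2 ^ 3 * y6 + (-1) * Av ^ 3 * Cv * u1 * u2 ^ 2 * y6 + (-1) * Av ^ 3 * Cv * u1 * u2 ^ 2 * y5 + (-1) * Av ^ 3 * Cv * u1 * u2 ^ 2 * y1 + (1) * Av ^ 3 * Cv * u1 ^ 2 * u2 * y5 + (1) * Av ^ 3 * Cv * u1 ^ 2 * u2 * y3 + (1) * Av ^ 3 * Cv * u1 ^ 2 * u2 * y1 + (-1) * Av ^ 3 * Cv * u1 ^ 3 * y3 + (-1) * Av ^ 3 * Bv * u2 ^ 3 * y6 + (1) * Av ^ 3 * Bv * u1 * u2 ^ 2 * y5 + (1) * Av ^ 3 * Bv * u1 * u2 ^ 2 * y4 + (1) * Av ^ 3 * Bv * u1 * u2 ^ 2 * y1 + (-1) * Av ^ 3 * Bv * u1 ^ 2 * u2 * y3 + (-1) * Av ^ 3 * Bv * u1 ^ 2 * u2 * y2 + (-1) * Av ^ 3 * Bv * u1 ^ 2 * u2 * y1 + (1) * Av ^ 3 * Bv * u1 ^ 3 * y1 := by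
    linear_combination ((Av - Bv) ^ 2 * (Bv - Cv) * (Av - Cv)) * s7 + u1 * hz1 - u2 * (Av - Bv) * hw2
  have hQ1 : (Bv - Cv) * vQ1 = (1) * Cv * u2 * y3 + (-1) * Cv * u1 * y3 + (-1) * Bv * u2 * y3 + (1) * Bv * u1 * y1 := by
    linear_combination (Bv - Cv) * s1' + u1 * d1'
  have hQ2 : (Bv - Cv) * vQ2 = (1) * Cv * u2 * y1 + (-1) * Cv * u1 * y3 + (-1) * Bv * u2 * y1 + (1) * Bv * u1 * y1 := by
    linear_combination (Bv - Cv) * s2' + u1 * d2'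
  have hQ3 : (Av - Cv) * vQ3 = (1) * Cv * u2 * y4 + (-1) * Cv * u1 * y4 + (-1) * Av * u2 * y4 + (1) * Av * u1 * y2 := by
    linear_combination (Av - Cv) * s3' + u1 * d3'
  have hQ4 : (Av - Bv) * vQ4 = (1) * Bv * u2 * y6 + (-1) * Bv * u1 * y6 + (-1) * Av * u2 * y6 + (1) * Av * u1 * y5 := by
    linear_combination (Av - Bv) * s4' + u1 * d4'
  have hR1 : ((Av - Bv) * (Bv - Cv) * (Av - Cv)) * vR1 = (1) * Bv * Cv ^ 2 * u2 * y4 + (-1) * Bv * Cv ^ 2 * u1 * y4 + (-1) * Bv ^ 2 * Cv * u2 * y4 + (1) * Bv ^ 2 * Cv * u1 * y4 + (-1) * Av * Cv ^ 2 * u2 * y3 + (1) * Av * Cv ^ 2 * u1 * y3 + (-1) * Av * Bv * Cv * u2 * y4 + (1) * Av * Bv * Cv * u2 * y3 + (1) * Av * Bv * Cv * u1 * y2 + (-1) * Av * Bv * Cv * u1 * y1 + (1) * Av * Bv ^ 2 * u2 * y4 + (-1) * Av * Bv ^ 2 * u1 * y2 + (1) * Av ^ 2 * Cv * u2 * y3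 + (-1) * Av ^ 2 * Cv * u1 * y3 + (-1) * Av ^ 2 * Bv * u2 * y3 + (1) * Av ^ 2 * Bv * u1 * y1 := by
    linear_combination (Bv - Cv) * (Av - Cv) * d5' + Av * (Av - Cv) * hQ1 - Bv * (Bv - Cv) * hQ3
  have hR2 : ((Av - Bv) * (Bv - Cv) * (Av - Cv)) * vR2 = (1) * Bv * Cv ^ 2 * u2 * y6 + (-1) * Bv * Cv ^ 2 * u1 * y6 + (-1) * Bv ^ 2 * Cv * u2 * y6 + (1) * Bv ^ 2 * Cv * u1 * y6 + (-1) * Av * Cv ^ 2 * u2 * y6 + (1) * Av * Cv ^ 2 * u1 * y5 + (1) * Av * Bv * Cv * u2 * y6 + (-1) * Av * Bv * Cv * u2 * y1 + (-1) * Av * Bv * Cv * u1 * y5 + (1) * Av * Bv * Cv * u1 * y3 + (1) * Av * Bv ^ 2 * u2 * y1 + (-1) * Av * Bv ^ 2 * u1 * y1 + (1) * Av ^ 2 * Cv * u2 * y1 + (-1) * Av ^ 2 * Cv * u1 * y3 + (-1) * Av ^ 2 * Bv * u2 * y1 + (1) * Av ^ 2 * Bv * u1 * y1 := by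
    linear_combination (Av - Bv) * (Bv - Cv) * d6' + Av * (Av - Bv) * hQ2 - Cv * (Bv - Cv) * hQ4
  have hW1 : ((Av - Bv) * (Bv - Cv) * (Av - Cv)) * vW1 = (-1) * Bv * Cv ^ 2 * u2 ^ 2 * y4 + (2) * Bv * Cv ^ 2 * u1 * u2 * y4 + (-1) * Bv * Cv ^ 2 * u1 ^ 2 * y4 + (1) * Bv ^ 2 * Cv * u2 ^ 2 * y4 + (-2) * Bv ^ 2 * Cv * u1 * u2 * y4 + (1) * Bv ^ 2 * Cv * u1 ^ 2 * y4 + (1) * Av * Cv ^ 2 * u2 ^ 2 * y4 + (-1) * Av * Cv ^ 2 * u1 * u2 * y4 + (-1) * Av * Cv ^ 2 * u1 * u2 * y3 + (1) * Av * Cv ^ 2 * u1 ^ 2 * y3 + (1) * Av * Bv * Cv * u1 * u2 * y3 + (-1) * Av * Bv * Cv * u1 * u2 * y2 + (1) * Av * Bv * Cv * u1 ^ 2 * y2 + (-1) * Av * Bv * Cv * u1 ^ 2 * y1 + (-1) * Av * Bv ^ 2 * u2 ^ 2 * y4 + (1) * Av * Bv ^ 2 * u1 * u2 * y4 + (1)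 * Av * Bv ^ 2 * u1 * u2 * y2 + (-1) * Av * Bv ^ 2 * u1 ^ 2 * y2 + (-1) * Av ^ 2 * Cv * u2 ^ 2 * y4 + (1) * Av ^ 2 * Cv * u1 * u2 * y3 + (1) * Av ^ 2 * Cv * u1 * u2 * y2 + (-1) * Av ^ 2 * Cv * u1 ^ 2 * y3 + (1) * Av ^ 2 * Bv * u2 ^ 2 * y4 + (-1) * Av ^ 2 * Bv * u1 * u2 * y3 + (-1) * Av ^ 2 * Bv * u1 * u2 * y2 + (1) * Av ^ 2 * Bv * u1 ^ 2 * y1 := by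
    linear_combination ((Av - Bv) * (Bv - Cv) * (Av - Cv)) * s5' + u1 * hR1 - u2 * ((Av - Bv) * (Bv - Cv)) * hQ3
  have hW2 : ((Av - Bv) * (Bv - Cv) * (Av - Cv)) * vW2 = (-1) * Bv * Cv ^ 2 * u2 ^ 2 * y6 + (2) * Bv * Cv ^ 2 * u1 * u2 * y6 + (-1) * Bv * Cv ^ 2 * u1 ^ 2 * y6 + (1) * Bv ^ 2 * Cv * u2 ^ 2 * y6 + (-2) * Bv ^ 2 * Cv * u1 * u2 * y6 + (1) * Bv ^ 2 * Cv * u1 ^ 2 * y6 + (1) * Av * Cv ^ 2 * u2 ^ 2 * y6 + (-1) * Av * Cv ^ 2 * u1 * u2 * y6 + (-1) * Av * Cv ^ 2 * u1 * u2 * y5 + (1) * Av * Cv ^ 2 * u1 ^ 2 * y5 + (1) * Av * Bv * Cv * u1 * u2 * y5 + (-1) * Av * Bv * Cv * u1 * u2 * y1 + (-1) * Av * Bv * Cv * u1 ^ 2 * y5 + (1) * Av * Bv * Cv * u1 ^ 2 * y3 + (-1) * Av * Bv ^ 2 * u2 ^ 2 * y6 + (1) * Av * Bv ^ 2 * u1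 * u2 * y6 + (1) * Av * Bv ^ 2 * u1 * u2 * y1 + (-1) * Av * Bv ^ 2 * u1 ^ 2 * y1 + (-1) * Av ^ 2 * Cv * u2 ^ 2 * y6 + (1) * Av ^ 2 * Cv * u1 * u2 * y5 + (1) * Av ^ 2 * Cv * u1 * u2 * y1 + (-1) * Av ^ 2 * Cv * u1 ^ 2 * y3 + (1) * Av ^ 2 * Bv * u2 ^ 2 * y6 + (-1) * Av ^ 2 * Bv * u1 * u2 * y5 + (-1) * Av ^ 2 * Bv * u1 * u2 * y1 + (1) * Av ^ 2 * Bv * u1 ^ 2 * y1 := by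
    linear_combination ((Av - Bv) * (Bv - Cv) * (Av - Cv)) * s6' + u1 * hR2 - u2 * ((Bv - Cv) * (Av - Cv)) * hQ4
  have hZ1 : ((Av - Bv) * (Bv - Cv) ^ 2 * (Av - Cv)) * vZ1 = (1) * Bv * Cv ^ 3 * u2 ^ 2 * y6 + (-2) * Bv * Cv ^ 3 * u1 * u2 * y6 + (1) * Bv * Cv ^ 3 * u1 ^ 2 * y6 + (-1) * Bv ^ 2 * Cv ^ 2 * u2 ^ 2 * y6 + (-1) * Bv ^ 2 * Cv ^ 2 * u2 ^ 2 * y4 + (2) * Bv ^ 2 * Cv ^ 2 * u1 * u2 * y6 + (2) * Bv ^ 2 * Cv ^ 2 * u1 * u2 * y4 + (-1) * Bv ^ 2 * Cv ^ 2 * u1 ^ 2 * y6 + (-1) * Bv ^ 2 * Cv ^ 2 * u1 ^ 2 * y4 + (1) * Bv ^ 3 * Cv * u2 ^ 2 * y4 + (-2) * Bv ^ 3 * Cv * u1 * u2 * y4 + (1) * Bv ^ 3 * Cv * u1 ^ 2 * y4 + (-1) * Av * Cv ^ 3 * u2 ^ 2 * y6 + (1) * Av * Cv ^ 3 * u1 *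 u2 * y6 + (1) * Av * Cv ^ 3 * u1 * u2 * y5 + (-1) * Av * Cv ^ 3 * u1 ^ 2 * y5 + (1) * Av * Bv * Cv ^ 2 * u2 ^ 2 * y4 + (-1) * Av * Bv * Cv ^ 2 * u1 * u2 * y5 + (-1) * Av * Bv * Cv ^ 2 * u1 * u2 * y4 + (-1) * Av * Bv * Cv ^ 2 * u1 * u2 * y3 + (1) * Av * Bv * Cv ^ 2 * u1 * u2 * y1 + (1) * Av * Bv * Cv ^ 2 * u1 ^ 2 * y5 + (1) * Av * Bv ^ 2 * Cv * u2 ^ 2 * y6 + (-1) * Av * Bv ^ 2 * Cv * u1 * u2 * y6 + (1) * Av * Bv ^ 2 * Cv * u1 * u2 * y3 + (-1) * Av * Bv ^ 2 * Cv * u1 * u2 * y2 + (-1) * Av * Bv ^ 2 * Cv * u1 * u2 * y1 + (1) * Av * Bv ^ 2 * Cv * u1 ^ 2 * y2 + (-1) * Av * Bv ^ 3 * u2 ^ 2 * y4 + (1) * Av * Bv ^ 3 * u1 * u2 * y4 + (1) * Av * Bv ^ 3 * u1 * u2 * y2 + (-1) * Av * Bv ^ 3 * u1 ^ 2 * y2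 + (1) * Av ^ 2 * Cv ^ 2 * u2 ^ 2 * y6 + (-1) * Av ^ 2 * Cv ^ 2 * u1 * u2 * y5 + (-1) * Av ^ 2 * Cv ^ 2 * u1 * u2 * y1 + (1) * Av ^ 2 * Cv ^ 2 * u1 ^ 2 * y3 + (-1) * Av ^ 2 * Bv * Cv * u2 ^ 2 * y6 + (-1) * Av ^ 2 * Bv * Cv * u2 ^ 2 * y4 + (1) * Av ^ 2 * Bv * Cv * u1 * u2 * y5 + (1) * Av ^ 2 * Bv * Cv * u1 * u2 * y3 + (1) * Av ^ 2 * Bv * Cv * u1 * u2 * y2 + (1) * Av ^ 2 * Bv * Cv * u1 * u2 * y1 + (-1) * Av ^ 2 * Bv * Cv * u1 ^ 2 * y3 + (-1) * Av ^ 2 * Bv * Cv * u1 ^ 2 * y1 + (1) * Av ^ 2 * Bv ^ 2 * u2 ^ 2 * y4 + (-1) * Av ^ 2 * Bv ^ 2 * u1 * u2 * y3 + (-1) * Av ^ 2 * Bv ^ 2 * u1 * u2 * y2 + (1) * Av ^ 2 * Bv ^ 2 * u1 ^ 2 * y1 := by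
    linear_combination ((Av - Bv) * (Bv - Cv) * (Av - Cv)) * d7' + Bv * hW1 - Cv * hW2
  have hFR : ((Av - Bv) * (Bv - Cv) ^ 2 * (Av - Cv)) * vFR = (-1) * Bv * Cv ^ 3 * u2 ^ 3 * y6 + (3) * Bv * Cv ^ 3 * u1 * u2 ^ 2 * y6 + (-3) * Bv * Cv ^ 3 * u1 ^ 2 * u2 * y6 + (1) * Bv * Cv ^ 3 * u1 ^ 3 * y6 + (2) * Bv ^ 2 * Cv ^ 2 * u2 ^ 3 * y6 + (-5) * Bv ^ 2 * Cv ^ 2 * u1 * u2 ^ 2 * y6 + (-1) * Bv ^ 2 * Cv ^ 2 * u1 * u2 ^ 2 * y4 + (4) * Bv ^ 2 * Cv ^ 2 * u1 ^ 2 * u2 * y6 + (2) * Bv ^ 2 * Cv ^ 2 * u1 ^ 2 * u2 * y4 + (-1) * Bv ^ 2 * Cv ^ 2 * u1 ^ 3 * y6 + (-1) * Bv ^ 2 * Cv ^ 2 * u1 ^ 3 * y4 + (-1) * Bv ^ 3 * Cv * u2 ^ 3 * y6 + (2) * Bv ^ 3 * Cv * u1 * u2 ^ 2 * y6 + (1)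 * Bv ^ 3 * Cv * u1 * u2 ^ 2 * y4 + (-1) * Bv ^ 3 * Cv * u1 ^ 2 * u2 * y6 + (-2) * Bv ^ 3 * Cv * u1 ^ 2 * u2 * y4 + (1) * Bv ^ 3 * Cv * u1 ^ 3 * y4 + (1) * Av * Cv ^ 3 * u2 ^ 3 * y6 + (-2) * Av * Cv ^ 3 * u1 * u2 ^ 2 * y6 + (-1) * Av * Cv ^ 3 * u1 * u2 ^ 2 * y5 + (1) * Av * Cv ^ 3 * u1 ^ 2 * u2 * y6 + (2) * Av * Cv ^ 3 * u1 ^ 2 * u2 * y5 + (-1) * Av * Cv ^ 3 * u1 ^ 3 * y5 + (-1) * Av * Bv * Cv ^ 2 * u2 ^ 3 * y6 + (1) * Av * Bv * Cv ^ 2 * u1 * u2 ^ 2 * y6 + (2) * Av * Bv * Cv ^ 2 * u1 * u2 ^ 2 * y5 + (1) * Av * Bv * Cv ^ 2 * u1 * u2 ^ 2 * y4 + (-1) * Av * Bv * Cv ^ 2 * u1 * u2 ^ 2 * y1 + (-3) * Av * Bv * Cv ^ 2 * u1 ^ 2 * u2 * y5 + (-1) * Av * Bv * Cv ^ 2 *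 u1 ^ 2 * u2 * y4 + (1) * Av * Bv * Cv ^ 2 * u1 ^ 2 * u2 * y1 + (1) * Av * Bv * Cv ^ 2 * u1 ^ 3 * y5 + (-1) * Av * Bv ^ 2 * Cv * u2 ^ 3 * y6 + (2) * Av * Bv ^ 2 * Cv * u1 * u2 ^ 2 * y6 + (-1) * Av * Bv ^ 2 * Cv * u1 * u2 ^ 2 * y5 + (2) * Av * Bv ^ 2 * Cv * u1 * u2 ^ 2 * y1 + (-1) * Av * Bv ^ 2 * Cv * u1 ^ 2 * u2 * y6 + (1) * Av * Bv ^ 2 * Cv * u1 ^ 2 * u2 * y5 + (-1) * Av * Bv ^ 2 * Cv * u1 ^ 2 * u2 * y2 + (-2) * Av * Bv ^ 2 * Cv * u1 ^ 2 * u2 * y1 + (1) * Av * Bv ^ 2 * Cv * u1 ^ 3 * y2 + (1) * Av * Bv ^ 3 * u2 ^ 3 * y6 + (-1) * Av * Bv ^ 3 * u1 * u2 ^ 2 * y6 + (-1) * Av * Bv ^ 3 * u1 * u2 ^ 2 * y4 + (-1) * Av * Bv ^ 3 * u1 * u2 ^ 2 * y1 + (1) * Av * Bv ^ 3 * u1 ^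 2 * u2 * y4 + (1) * Av * Bv ^ 3 * u1 ^ 2 * u2 * y2 + (1) * Av * Bv ^ 3 * u1 ^ 2 * u2 * y1 + (-1) * Av * Bv ^ 3 * u1 ^ 3 * y2 + (-1) * Av ^ 2 * Cv ^ 2 * u2 ^ 3 * y6 + (1) * Av ^ 2 * Cv ^ 2 * u1 * u2 ^ 2 * y6 + (1) * Av ^ 2 * Cv ^ 2 * u1 * u2 ^ 2 * y5 + (1) * Av ^ 2 * Cv ^ 2 * u1 * u2 ^ 2 * y1 + (-1) * Av ^ 2 * Cv ^ 2 * u1 ^ 2 * u2 * y5 + (-1) * Av ^ 2 * Cv ^ 2 * u1 ^ 2 * u2 * y3 + (-1) * Av ^ 2 * Cv ^ 2 * u1 ^ 2 * u2 * y1 + (1) * Av ^ 2 * Cv ^ 2 * u1 ^ 3 * y3 + (2) * Av ^ 2 * Bv * Cv * u2 ^ 3 * y6 + (-1) * Av ^ 2 * Bv * Cv * u1 * u2 ^ 2 * y6 + (-2) * Av ^ 2 * Bv * Cv * u1 * u2 ^ 2 * y5 + (-1) * Av ^ 2 * Bv * Cv * u1 * u2 ^ 2 * y4 + (-2) * Av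 ^ 2 * Bv * Cv * u1 * u2 ^ 2 * y1 + (1) * Av ^ 2 * Bv * Cv * u1 ^ 2 * u2 * y5 + (2) * Av ^ 2 * Bv * Cv * u1 ^ 2 * u2 * y3 + (1) * Av ^ 2 * Bv * Cv * u1 ^ 2 * u2 * y2 + (2) * Av ^ 2 * Bv * Cv * u1 ^ 2 * u2 * y1 + (-1) * Av ^ 2 * Bv * Cv * u1 ^ 3 * y3 + (-1) * Av ^ 2 * Bv * Cv * u1 ^ 3 * y1 + (-1) * Av ^ 2 * Bv ^ 2 * u2 ^ 3 * y6 + (1) * Av ^ 2 * Bv ^ 2 * u1 * u2 ^ 2 * y5 + (1) * Av ^ 2 * Bv ^ 2 * u1 * u2 ^ 2 * y4 + (1) * Av ^ 2 * Bv ^ 2 * u1 * u2 ^ 2 * y1 + (-1) * Av ^ 2 * Bv ^ 2 * u1 ^ 2 * u2 * y3 + (-1) * Av ^ 2 * Bv ^ 2 * u1 ^ 2 * u2 * y2 + (-1) * Av ^ 2 * Bv ^ 2 * u1 ^ 2 * u2 * y1 + (1) * Av ^ 2 * Bv ^ 2 * u1 ^ 3 * y1 := by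
    linear_combination ((Av - Bv) * (Bv - Cv) ^ 2 * (Av - Cv)) * s7' + u1 * hZ1 - u2 * (Bv - Cv) * hW2
  have key : ((Av - Bv) ^ 2 * (Bv - Cv) ^ 2 * (Av - Cv)) * vFL =
      ((Av - Bv) ^ 2 * (Bv - Cv) ^ 2 * (Av - Cv)) * vFR := by
    linear_combination (Bv - Cv) * hFL - (Av - Bv) * hFR
  exact mul_left_cancel₀
    (mul_ne_zero (mul_ne_zero (pow_ne_zero 2 nAB) (pow_ne_zero 2 nBC)) nAC) key

/-- auxiliary: the canonical map to the fraction field. -/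
def φK (n : ℕ) : MvPolynomial (Fin n) Fqt →+* FractionRing (MvPolynomial (Fin n) Fqt) :=
  algebraMap _ _

set_option maxHeartbeats 4000000 in
set_option synthInstance.maxHeartbeats 1000000 in
/-- The Hecke operators `T_i := π_i (t₁ + t₂) - s_i t₂` satisfy the braid relation
`T_i T_{i+1} T_i = T_{i+1} T_i T_{i+1}` on polynomials in `n` variables over `ℚ(t₁, t₂)`. -/
theorem hecke_braid_relation (n : ℕ) (i : ℕ) (h : i + 2 < n)
    (P P' : MvPolynomial (Fin n) Fqt → MvPolynomial (Fin n) Fqt)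
    (hP : ∀ f, (X ⟨i, by omega⟩ - X ⟨i + 1, by omega⟩) * P f =
      X ⟨i, by omega⟩ * f -
        X ⟨i + 1, by omega⟩ *
          rename ⇑(Equiv.swap (⟨i, by omega⟩ : Fin n) ⟨i + 1, by omega⟩) f)
    (hP' : ∀ f, (X ⟨i + 1, by omega⟩ - X ⟨i + 2, h⟩) * P' f =
      X ⟨i + 1, by omega⟩ * f -
        X ⟨i + 2, h⟩ *
          rename ⇑(Equiv.swap (⟨i + 1, by omega⟩ : Fin n) ⟨i + 2, h⟩) f) :
    let T : MvPolynomial (Fin n) Fqt → MvPolynomial (Fin n) Fqt := fun f =>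
      C (t1 + t2) * P f -
        C t2 * rename ⇑(Equiv.swap (⟨i, by omega⟩ : Fin n) ⟨i + 1, by omega⟩) f
    let T' : MvPolynomial (Fin n) Fqt → MvPolynomial (Fin n) Fqt := fun f =>
      C (t1 + t2) * P' f -
        C t2 * rename ⇑(Equiv.swap (⟨i + 1, by omega⟩ : Fin n) ⟨i + 2, h⟩) f
    ∀ f, T (T' (T f)) = T' (T (T' f)) := by
  intro T T' f
  set ia : Fin n := ⟨i, by omega⟩ with hia
  set ib : Fin n := ⟨i + 1, by omega⟩ with hib
  set ic : Fin n := ⟨i + 2, h⟩ with hic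
  have hab : ia ≠ ib := by simp [hia, hib, Fin.ext_iff]
  have hbc : ib ≠ ic := by simp [hib, hic, Fin.ext_iff]
  have hac : ia ≠ ic := by simp [hia, hic, Fin.ext_iff]
  set es := Equiv.swap ia ib with hes
  set er := Equiv.swap ib ic with her
  -- swap evaluation facts
  have e1 : es ia = ib := Equiv.swap_apply_left _ _
  have e2 : es ib = ia := Equiv.swap_apply_right _ _
  have e3 : es ic = ic := Equiv.swap_apply_of_ne_of_ne hac.symm hbc.symm
  have e4 : er ia = ia := Equiv.swap_apply_of_ne_of_ne hab hac
  have e5 : er ib = ic := Equiv.swap_apply_left _ _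
  have e6 : er ic = ib := Equiv.swap_apply_right _ _
  have hT : ∀ g, T g = C (t1 + t2) * P g - C t2 * rename ⇑es g := fun g => rfl
  have hT' : ∀ g, T' g = C (t1 + t2) * P' g - C t2 * rename ⇑er g := fun g => rfl
  have hss : ∀ g : MvPolynomial (Fin n) Fqt, rename ⇑es (rename ⇑es g) = g := by
    intro g
    rw [rename_rename]
    have : ⇑es ∘ ⇑es = id := by funext x; simp [hes, Equiv.swap_apply_self]
    rw [this, rename_id, AlgHom.id_apply]
  have hrr : ∀ g : MvPolynomial (Fin n) Fqt, rename ⇑er (rename ⇑er g) = g := by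
    intro g
    rw [rename_rename]
    have : ⇑er ∘ ⇑er = id := by funext x; simp [her, Equiv.swap_apply_self]
    rw [this, rename_id, AlgHom.id_apply]
  have hbrfun : (⇑er ∘ ⇑es) ∘ ⇑er = (⇑es ∘ ⇑er) ∘ ⇑es := by
    funext x
    rcases eq_or_ne x ia with rfl | h1
    · simp only [Function.comp_apply, e1, e2, e3, e4, e5, e6]
    rcases eq_or_ne x ib with rfl | h2
    · simp only [Function.comp_apply, e1, e2, e3, e4, e5, e6]
    rcases eq_or_ne x ic with rfl | h3
    · simp only [Function.comp_apply, e1, e2, e3, e4, e5, e6]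
    · have fs : es x = x := Equiv.swap_apply_of_ne_of_ne h1 h2
      have fr : er x = x := Equiv.swap_apply_of_ne_of_ne h2 h3
      simp only [Function.comp_apply, fs, fr]
  have hbr : ∀ g : MvPolynomial (Fin n) Fqt,
      rename ⇑er (rename ⇑es (rename ⇑er g)) = rename ⇑es (rename ⇑er (rename ⇑es g)) := by
    intro g
    rw [rename_rename, rename_rename, rename_rename, rename_rename, hbrfun]
  have hinj : Function.Injective (φK n) := IsFractionRing.injective _ _
  have hXne : ∀ {p q : Fin n}, p ≠ q → φK n (X p) - φK n (X q) ≠ 0 := by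
    intro p q hpq hz
    exact hpq (X_injective (hinj (sub_eq_zero.mp hz)))
  apply hinj
  have d1 : (φK n (X ia) - φK n (X ib)) * φK n (P f) = φK n (X ia) * φK n f - φK n (X ib) * φK n (rename ⇑es f) := by
    have hh := congrArg (φK n) (hP f)
    simp only [map_sub, map_mul, rename_X, rename_C, e1, e2, e3, e4, e5, e6, hss, hrr, hbr] at hh
    linear_combination hh
  have d2 : (φK n (X ia) - φK n (X ib)) * φK n (rename ⇑es (P f)) = φK n (X ia) * φK n f - φK n (X ib) * φK n (rename ⇑es f) := by
    have hh := congrArg (fun p => φK n (rename ⇑es p)) (hP f)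
    simp only [map_sub, map_mul, rename_X, rename_C, e1, e2, e3, e4, e5, e6, hss, hrr, hbr] at hh
    linear_combination -hh
  have d3 : (φK n (X ia) - φK n (X ic)) * φK n (rename ⇑er (P f)) = φK n (X ia) * φK n (rename ⇑er f) - φK n (X ic) * φK n (rename ⇑er (rename ⇑es f)) := by
    have hh := congrArg (fun p => φK n (rename ⇑er p)) (hP f)
    simp only [map_sub, map_mul, rename_X, rename_C, e1, e2, e3, e4, e5, e6, hss, hrr, hbr] at hh
    linear_combination hh
  have d4 : (φK n (X ib) - φK n (X ic)) * φK n (rename ⇑es (rename ⇑er (P f))) = φK n (X ib) * φK n (rename ⇑es (rename ⇑er f)) - φK n (X ic) * φK n (rename ⇑es (rename ⇑er (rename ⇑es f))) := by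
    have hh := congrArg (fun p => φK n (rename ⇑es (rename ⇑er p))) (hP f)
    simp only [map_sub, map_mul, rename_X, rename_C, e1, e2, e3, e4, e5, e6, hss, hrr, hbr] at hh
    linear_combination hh
  have s1 : φK n (T f) = φK n (C (t1 + t2)) * φK n (P f) - φK n (C t2) * φK n (rename ⇑es f) := by
    rw [hT]
    simp only [map_sub, map_mul, rename_X, rename_C, e1, e2, e3, e4, e5, e6, hss, hrr, hbr]
  have s2 : φK n (rename ⇑es (T f)) = φK n (C (t1 + t2)) * φK n (rename ⇑es (P f)) - φK n (C t2) * φK n f := by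
    rw [hT]
    simp only [map_sub, map_mul, rename_X, rename_C, e1, e2, e3, e4, e5, e6, hss, hrr, hbr]
  have s3 : φK n (rename ⇑er (T f)) = φK n (C (t1 + t2)) * φK n (rename ⇑er (P f)) - φK n (C t2) * φK n (rename ⇑er (rename ⇑es f)) := by
    rw [hT]
    simp only [map_sub, map_mul, rename_X, rename_C, e1, e2, e3, e4, e5, e6, hss, hrr, hbr]
  have s4 : φK n (rename ⇑es (rename ⇑er (T f))) = φK n (C (t1 + t2)) * φK n (rename ⇑es (rename ⇑er (P f))) - φK n (C t2) * φK n (rename ⇑es (rename ⇑er (rename ⇑es f))) := by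
    rw [hT]
    simp only [map_sub, map_mul, rename_X, rename_C, e1, e2, e3, e4, e5, e6, hss, hrr, hbr]
  have d5 : (φK n (X ib) - φK n (X ic)) * φK n (P' (T f)) = φK n (X ib) * φK n (T f) - φK n (X ic) * φK n (rename ⇑er (T f)) := by
    have hh := congrArg (φK n) (hP' (T f))
    simp only [map_sub, map_mul, rename_X, rename_C, e1, e2, e3, e4, e5, e6, hss, hrr, hbr] at hh
    linear_combination hh
  have d6 : (φK n (X ia) - φK n (X ic)) * φK n (rename ⇑es (P' (T f))) = φK n (X ia) * φK n (rename ⇑es (T f)) - φK n (X ic) * φK n (rename ⇑es (rename ⇑er (T f))) := by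
    have hh := congrArg (fun p => φK n (rename ⇑es p)) (hP' (T f))
    simp only [map_sub, map_mul, rename_X, rename_C, e1, e2, e3, e4, e5, e6, hss, hrr, hbr] at hh
    linear_combination hh
  have s5 : φK n (T' (T f)) = φK n (C (t1 + t2)) * φK n (P' (T f)) - φK n (C t2) * φK n (rename ⇑er (T f)) := by
    rw [hT']
    simp only [map_sub, map_mul, rename_X, rename_C, e1, e2, e3, e4, e5, e6, hss, hrr, hbr]
  have s6 : φK n (rename ⇑es (T' (T f))) = φK n (C (t1 + t2)) * φK n (rename ⇑es (P' (T f))) - φK n (C t2) * φK n (rename ⇑es (rename ⇑er (T f))) := by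
    rw [hT']
    simp only [map_sub, map_mul, rename_X, rename_C, e1, e2, e3, e4, e5, e6, hss, hrr, hbr]
  have d7 : (φK n (X ia) - φK n (X ib)) * φK n (P (T' (T f))) = φK n (X ia) * φK n (T' (T f)) - φK n (X ib) * φK n (rename ⇑es (T' (T f))) := by
    have hh := congrArg (φK n) (hP (T' (T f)))
    simp only [map_sub, map_mul, rename_X, rename_C, e1, e2, e3, e4, e5, e6, hss, hrr, hbr] at hh
    linear_combination hh
  have s7 : φK n (T (T' (T f))) = φK n (C (t1 + t2)) * φK n (P (T' (T f))) - φK n (C t2) * φK n (rename ⇑es (T' (T f))) := by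
    rw [hT]
    simp only [map_sub, map_mul, rename_X, rename_C, e1, e2, e3, e4, e5, e6, hss, hrr, hbr]
  have d1' : (φK n (X ib) - φK n (X ic)) * φK n (P' f) = φK n (X ib) * φK n f - φK n (X ic) * φK n (rename ⇑er f) := by
    have hh := congrArg (φK n) (hP' f)
    simp only [map_sub, map_mul, rename_X, rename_C, e1, e2, e3, e4, e5, e6, hss, hrr, hbr] at hh
    linear_combination hh
  have d2' : (φK n (X ib) - φK n (X ic)) * φK n (rename ⇑er (P' f)) = φK n (X ib) * φK n f - φK n (X ic) * φK n (rename ⇑er f) := by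
    have hh := congrArg (fun p => φK n (rename ⇑er p)) (hP' f)
    simp only [map_sub, map_mul, rename_X, rename_C, e1, e2, e3, e4, e5, e6, hss, hrr, hbr] at hh
    linear_combination -hh
  have d3' : (φK n (X ia) - φK n (X ic)) * φK n (rename ⇑es (P' f)) = φK n (X ia) * φK n (rename ⇑es f) - φK n (X ic) * φK n (rename ⇑es (rename ⇑er f)) := by
    have hh := congrArg (fun p => φK n (rename ⇑es p)) (hP' f)
    simp only [map_sub, map_mul, rename_X, rename_C, e1, e2, e3, e4, e5, e6, hss, hrr, hbr] at hh
    linear_combination hh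
  have d4' : (φK n (X ia) - φK n (X ib)) * φK n (rename ⇑er (rename ⇑es (P' f))) = φK n (X ia) * φK n (rename ⇑er (rename ⇑es f)) - φK n (X ib) * φK n (rename ⇑es (rename ⇑er (rename ⇑es f))) := by
    have hh := congrArg (fun p => φK n (rename ⇑er (rename ⇑es p))) (hP' f)
    simp only [map_sub, map_mul, rename_X, rename_C, e1, e2, e3, e4, e5, e6, hss, hrr, hbr] at hh
    linear_combination hh
  have s1' : φK n (T' f) = φK n (C (t1 + t2)) * φK n (P' f) - φK n (C t2) * φK n (rename ⇑er f) := by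
    rw [hT']
    simp only [map_sub, map_mul, rename_X, rename_C, e1, e2, e3, e4, e5, e6, hss, hrr, hbr]
  have s2' : φK n (rename ⇑er (T' f)) = φK n (C (t1 + t2)) * φK n (rename ⇑er (P' f)) - φK n (C t2) * φK n f := by
    rw [hT']
    simp only [map_sub, map_mul, rename_X, rename_C, e1, e2, e3, e4, e5, e6, hss, hrr, hbr]
  have s3' : φK n (rename ⇑es (T' f)) = φK n (C (t1 + t2)) * φK n (rename ⇑es (P' f)) - φK n (C t2) * φK n (rename ⇑es (rename ⇑er f)) := by
    rw [hT']
    simp only [map_sub, map_mul, rename_X, rename_C, e1, e2, e3, e4, e5, e6, hss, hrr, hbr]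
  have s4' : φK n (rename ⇑er (rename ⇑es (T' f))) = φK n (C (t1 + t2)) * φK n (rename ⇑er (rename ⇑es (P' f))) - φK n (C t2) * φK n (rename ⇑es (rename ⇑er (rename ⇑es f))) := by
    rw [hT']
    simp only [map_sub, map_mul, rename_X, rename_C, e1, e2, e3, e4, e5, e6, hss, hrr, hbr]
  have d5' : (φK n (X ia) - φK n (X ib)) * φK n (P (T' f)) = φK n (X ia) * φK n (T' f) - φK n (X ib) * φK n (rename ⇑es (T' f)) := by
    have hh := congrArg (φK n) (hP (T' f))
    simp only [map_sub, map_mul, rename_X, rename_C, e1, e2, e3, e4, e5, e6, hss, hrr, hbr] at hh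
    linear_combination hh
  have d6' : (φK n (X ia) - φK n (X ic)) * φK n (rename ⇑er (P (T' f))) = φK n (X ia) * φK n (rename ⇑er (T' f)) - φK n (X ic) * φK n (rename ⇑er (rename ⇑es (T' f))) := by
    have hh := congrArg (fun p => φK n (rename ⇑er p)) (hP (T' f))
    simp only [map_sub, map_mul, rename_X, rename_C, e1, e2, e3, e4, e5, e6, hss, hrr, hbr] at hh
    linear_combination hh
  have s5' : φK n (T (T' f)) = φK n (C (t1 + t2)) * φK n (P (T' f)) - φK n (C t2) * φK n (rename ⇑es (T' f)) := by
    rw [hT]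
    simp only [map_sub, map_mul, rename_X, rename_C, e1, e2, e3, e4, e5, e6, hss, hrr, hbr]
  have s6' : φK n (rename ⇑er (T (T' f))) = φK n (C (t1 + t2)) * φK n (rename ⇑er (P (T' f))) - φK n (C t2) * φK n (rename ⇑er (rename ⇑es (T' f))) := by
    rw [hT]
    simp only [map_sub, map_mul, rename_X, rename_C, e1, e2, e3, e4, e5, e6, hss, hrr, hbr]
  have d7' : (φK n (X ib) - φK n (X ic)) * φK n (P' (T (T' f))) = φK n (X ib) * φK n (T (T' f)) - φK n (X ic) * φK n (rename ⇑er (T (T' f))) := by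
    have hh := congrArg (φK n) (hP' (T (T' f)))
    simp only [map_sub, map_mul, rename_X, rename_C, e1, e2, e3, e4, e5, e6, hss, hrr, hbr] at hh
    linear_combination hh
  have s7' : φK n (T' (T (T' f))) = φK n (C (t1 + t2)) * φK n (P' (T (T' f))) - φK n (C t2) * φK n (rename ⇑er (T (T' f))) := by
    rw [hT']
    simp only [map_sub, map_mul, rename_X, rename_C, e1, e2, e3, e4, e5, e6, hss, hrr, hbr]
  have nAB := hXne hab
  have nBC := hXne hbc
  have nAC := hXne hac
  exact braid_algebra nAB nBC nAC d1 d2 d3 d4 s1 s2 s3 s4 d5 d6 s5 s6 d7 s7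
    d1' d2' d3' d4' s1' s2' s3' s4' d5' d6' s5' s6' d7' s7'


end
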